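/- Let K be a normal subgroup of a group G, let V be a nonzero finite-dimensional complex vector space, and let ρ : K → GL(V) be an irreducible representation. Let g ∈ G and n ≥ 1 be such that gⁿ ∈ K, and suppose T ∈ GL(V) satisfies ρ(g k g⁻¹) = T ρ(k) T⁻¹ for all k ∈ K. Then there exists μ ∈ ℂˣ such that (μT)ⁿ = ρ(gⁿ). -/

import Mathlib

/-- A representation `ρ : K → GL(V)` is irreducible if `V ≠ 0` and the only
subspaces of `V` invariant under all `ρ(k)` are `0` and `V`. -/
def IsIrreducibleRep {K : Type*} [Group K] {V : Type*} [AddCommGroup V] [Module ℂ V]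
    (ρ : K →* (V →ₗ[ℂ] V)ˣ) : Prop :=
  Nontrivial V ∧
    ∀ W : Submodule ℂ V, (∀ k : K, ∀ v ∈ W, (ρ k : V →ₗ[ℂ] V) v ∈ W) → W = ⊥ ∨ W = ⊤

/-- For a normal subgroup `K ⊆ G` and `g ∈ G`, the homomorphism
`Int_g|_K : K → K`, `k ↦ g k g⁻¹`. -/
def intK {G : Type*} [Group G] (K : Subgroup G) [K.Normal] (g : G) : ↥K →* ↥K :=
  (MulAut.conjNormal g).toMonoidHom

/-- Schur's lemma normalisation: if `ρ : K → GL(V)` is irreducible, `gⁿ ∈ K` with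
`n ≥ 1`, and `T ∈ GL(V)` satisfies `ρ(g k g⁻¹) = T ρ(k) T⁻¹` for all `k ∈ K`, then
there is `μ ∈ ℂˣ` with `(μT)ⁿ = ρ(gⁿ)`. -/
theorem statement8 {G : Type*} [Group G] (K : Subgroup G) [K.Normal]
    {V : Type*} [AddCommGroup V] [Module ℂ V] [FiniteDimensional ℂ V]
    (ρ : ↥K →* (V →ₗ[ℂ] V)ˣ) (hirr : IsIrreducibleRep ρ)
    (g : G) (n : ℕ) (hn : 1 ≤ n) (hgn : g ^ n ∈ K)
    (T : (V →ₗ[ℂ] V)ˣ)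
    (hT : ∀ k : ↥K, ρ (intK K g k) = T * ρ k * T⁻¹) :
    ∃ μ : ℂˣ, ((μ : ℂ) • (T : V →ₗ[ℂ] V)) ^ n = (ρ ⟨g ^ n, hgn⟩ : V →ₗ[ℂ] V) := by
  obtain ⟨hV, hW⟩ := hirr
  -- conjugation by powers of g
  have key : ∀ m : ℕ, ∀ k : ↥K, ρ (intK K (g ^ m) k) = T ^ m * ρ k * (T ^ m)⁻¹ := by
    intro m
    induction m with
    | zero =>
      intro k
      simp [intK, Subtype.ext_iff, MulAut.conjNormal_apply]
    | succ m ih =>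
      intro k
      have h1 : intK K (g ^ (m + 1)) k = intK K g (intK K (g ^ m) k) := by
        ext
        simp only [intK, MulEquiv.coe_toMonoidHom, MulAut.conjNormal_apply]
        rw [pow_succ]
        group
      rw [h1, hT, ih]
      group
  set gn : ↥K := ⟨g ^ n, hgn⟩ with hgn'
  have hconj : ∀ k : ↥K, intK K (g ^ n) k = gn * k * gn⁻¹ := by
    intro k; ext
    simp only [intK, MulEquiv.coe_toMonoidHom, MulAut.conjNormal_apply, Subgroup.coe_mul,
      InvMemClass.coe_inv]
    rfl
  -- S commutes with everything
  set S : (V →ₗ[ℂ] V)ˣ := (ρ gn)⁻¹ * T ^ n with hS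
  have hcomm : ∀ k : ↥K, S * ρ k = ρ k * S := by
    intro k
    have h1 : T ^ n * ρ k = ρ gn * ρ k * (ρ gn)⁻¹ * T ^ n := by
      have := key n k
      rw [hconj k] at this
      simp only [map_mul] at this
      calc T ^ n * ρ k = T ^ n * ρ k * (T ^ n)⁻¹ * T ^ n := by group
        _ = ρ gn * ρ k * (ρ gn)⁻¹ * T ^ n := by rw [← this]; simp [map_mul]
    rw [hS]
    calc (ρ gn)⁻¹ * T ^ n * ρ k = (ρ gn)⁻¹ * (T ^ n * ρ k) := by rw [mul_assoc]
      _ = (ρ gn)⁻¹ * (ρ gn * ρ k * (ρ gn)⁻¹ * T ^ n) := by rw [h1]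
      _ = ρ k * ((ρ gn)⁻¹ * T ^ n) := by group
  -- eigenvalue of S
  set f : Module.End ℂ V := (S : V →ₗ[ℂ] V) with hf
  obtain ⟨c, hc⟩ := Module.End.exists_eigenvalue f
  set W : Submodule ℂ V := Module.End.eigenspace f c with hWdef
  have hWne : W ≠ ⊥ := hc
  have hWinv : ∀ k : ↥K, ∀ v ∈ W, (ρ k : V →ₗ[ℂ] V) v ∈ W := by
    intro k v hv
    rw [hWdef, Module.End.mem_eigenspace_iff] at hv ⊢
    have : f ((ρ k : V →ₗ[ℂ] V) v) = (ρ k : V →ₗ[ℂ] V) (f v) := by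
      have := hcomm k
      have h2 : (S : V →ₗ[ℂ] V) * (ρ k : V →ₗ[ℂ] V) = (ρ k : V →ₗ[ℂ] V) * (S : V →ₗ[ℂ] V) := by
        exact_mod_cast congrArg Units.val this
      exact LinearMap.congr_fun h2 v
    rw [this, hv, map_smul]
  have hWtop : W = ⊤ := (hW W hWinv).resolve_left hWne
  have hfv : ∀ v : V, f v = c • v := by
    intro v
    have : v ∈ W := hWtop ▸ Submodule.mem_top
    rwa [hWdef, Module.End.mem_eigenspace_iff] at this
  have hc0 : c ≠ 0 := by
    intro h
    obtain ⟨v, hv⟩ := exists_ne (0 : V)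
    apply hv
    have : f v = 0 := by rw [hfv, h, zero_smul]
    have h4 : ((S⁻¹ : (V →ₗ[ℂ] V)ˣ) : V →ₗ[ℂ] V) (f v) = v := by
      show ((S⁻¹ : (V →ₗ[ℂ] V)ˣ) : V →ₗ[ℂ] V) (((S : V →ₗ[ℂ] V)) v) = v
      rw [← LinearMap.comp_apply, ← Module.End.mul_eq_comp, ← Units.val_mul, inv_mul_cancel]
      rfl
    rw [this, map_zero] at h4
    exact h4.symm
  -- T^n = c • ρ gn
  have hTn : (T : V →ₗ[ℂ] V) ^ n = c • (ρ gn : V →ₗ[ℂ] V) := by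
    have h5 : (S : V →ₗ[ℂ] V) = c • (1 : V →ₗ[ℂ] V) := by
      ext v; simpa using hfv v
    have h6 : (T ^ n : (V →ₗ[ℂ] V)ˣ) = ρ gn * S := by rw [hS]; group
    calc (T : V →ₗ[ℂ] V) ^ n = ((T ^ n : (V →ₗ[ℂ] V)ˣ) : V →ₗ[ℂ] V) := by
          rw [Units.val_pow_eq_pow_val]
      _ = (ρ gn : V →ₗ[ℂ] V) * (S : V →ₗ[ℂ] V) := by rw [h6]; rfl
      _ = c • (ρ gn : V →ₗ[ℂ] V) := by rw [h5]; simp [mul_smul_comm]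
  obtain ⟨μ, hμ⟩ := IsAlgClosed.exists_pow_nat_eq (c⁻¹) (by omega : 0 < n)
  have hμ0 : μ ≠ 0 := by
    intro h
    rw [h, zero_pow (by omega)] at hμ
    exact hc0 (by simpa using congrArg Inv.inv hμ.symm)
  refine ⟨Units.mk0 μ hμ0, ?_⟩
  rw [smul_pow, hTn, Units.val_mk0, hμ, smul_smul, inv_mul_cancel₀ hc0, one_smul]
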